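/- Let A be a commutative algebra, M(A) the set of multiplicative maps A → A, E(A) the set of idempotents, and M(A)⋉E(A) the set of equivalence classes [φ, e] of pairs with φ|_{Ae} : Ae → Aφ(e) bijective (where (φ,e) ∼ (ψ,f) iff e = f and φ|_{Ae} = ψ|_{Ae}). Then M(A)⋉E(A) is a regular monoid under the product [φ,e][ψ,f] = [φ∘ψ, ψ^{-1}(e·ψ(f))], with unit [id, 1_A] and pseudo-inverse [φ,e]* = [φ^{-1}, φ(e)]. -/
import Mathlib


/-- The unital ideal `A·e` generated by an element `e` of a commutative ring. -/
def idealOf {A : Type*} [CommRing A] (e : A) : Set A := Set.range (fun a => a * e)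

/-- `φ : A → A` is multiplicative. -/
def Mult {A : Type*} [CommRing A] (φ : A → A) : Prop := ∀ x y : A, φ (x * y) = φ x * φ y

/-- `(φ, e)` represents an element of `M(A) ⋉ E(A)`: `φ` is multiplicative, `e` is
idempotent, and `φ` restricts to a bijection `Ae → Aφ(e)`. -/
def GoodPair {A : Type*} [CommRing A] (φ : A → A) (e : A) : Prop :=
  Mult φ ∧ e * e = e ∧ Set.BijOn φ (idealOf e) (idealOf (φ e))

/-- The equivalence relation on pairs: `(φ,e) ∼ (ψ,f)` iff `e = f` and
`φ|_{Ae} = ψ|_{Ae}`. -/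
def PairRel {A : Type*} [CommRing A] (φ : A → A) (e : A) (ψ : A → A) (f : A) : Prop :=
  e = f ∧ Set.EqOn φ ψ (idealOf e)

namespace MAEA
variable {A : Type*} [CommRing A]

lemma mul_mem (a : A) {e : A} : a * e ∈ idealOf e := ⟨a, rfl⟩

lemma self_mem {e : A} (he : e * e = e) : e ∈ idealOf e := ⟨e, he⟩

lemma subset_of_mem {e g : A} (hg : g ∈ idealOf e) :
    idealOf g ⊆ idealOf e := by
  rintro x ⟨a, rfl⟩
  obtain ⟨b, rfl⟩ := hg
  exact ⟨a * b, by ring⟩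

lemma map_mem {φ : A → A} (hφ : Mult φ) {e x : A} (hx : x ∈ idealOf e) :
    φ x ∈ idealOf (φ e) := by
  obtain ⟨a, rfl⟩ := hx; exact ⟨φ a, (hφ a e).symm⟩

lemma idem_map {φ : A → A} (hφ : Mult φ) {g : A} (hg : g * g = g) :
    φ g * φ g = φ g := by rw [← hφ, hg]

lemma restrict {φ : A → A} {e g : A} (hφ : Mult φ) (he : e * e = e)
    (hb : Set.BijOn φ (idealOf e) (idealOf (φ e)))
    (hg : g ∈ idealOf e) (hgg : g * g = g) :
    Set.BijOn φ (idealOf g) (idealOf (φ g)) := by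
  have hsub := subset_of_mem hg
  have hφg : φ g * φ g = φ g := idem_map hφ hgg
  refine ⟨fun x hx => map_mem hφ hx, hb.injOn.mono hsub, ?_⟩
  rintro y ⟨b, rfl⟩
  have hy : b * φ g ∈ idealOf (φ e) := subset_of_mem (map_mem hφ hg) (mul_mem b)
  obtain ⟨x, hx, hfx⟩ := hb.surjOn hy
  refine ⟨x * g, mul_mem x, ?_⟩
  rw [hφ x g, hfx, mul_assoc, hφg]

end MAEA

open MAEA in
/-- **`M(A) ⋉ E(A)` is a regular monoid** under
`[φ,e]·[ψ,f] = [φ∘ψ, ψ⁻¹(e·ψ(f))]` with unit `[id, 1]` and pseudo-inverse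
`[φ,e]* = [φ⁻¹, φ(e)]`.  (A representative of `ψ⁻¹(e·ψ(f))` is any `g ∈ Af` with
`ψ(g) = e·ψ(f)`; a representative of `φ⁻¹` is any multiplicative `ψ` inverting `φ`
between `Ae` and `Aφ(e)`.)  Concretely: the product of good pairs is a good pair;
the product is well defined on equivalence classes; it is associative up to the
equivalence; `[id, 1]` is a two-sided unit; and every class `[φ,e]` has a
pseudo-inverse `[φ⁻¹, φ(e)]` with `x·x*·x ∼ x` and `x*·x·x* ∼ x*`. -/
theorem MA_semidirect_EA_regular_monoid {A : Type*} [CommRing A] :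
    -- closure of the product
    (∀ (φ : A → A) (e : A) (ψ : A → A) (f g : A), GoodPair φ e → GoodPair ψ f →
      g ∈ idealOf f → ψ g = e * ψ f → GoodPair (φ ∘ ψ) g) ∧
    -- the product is well defined on equivalence classes
    (∀ (φ φ' ψ ψ' : A → A) (e e' f f' g g' : A),
      GoodPair φ e → GoodPair φ' e' → GoodPair ψ f → GoodPair ψ' f' →
      PairRel φ e φ' e' → PairRel ψ f ψ' f' →
      g ∈ idealOf f → ψ g = e * ψ f →
      g' ∈ idealOf f' → ψ' g' = e' * ψ' f' →
      PairRel (φ ∘ ψ) g (φ' ∘ ψ') g') ∧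
    -- associativity up to the equivalence
    (∀ (φ ψ χ : A → A) (e f h g₁ g₂ g₃ g₄ : A),
      GoodPair φ e → GoodPair ψ f → GoodPair χ h →
      g₁ ∈ idealOf f → ψ g₁ = e * ψ f →
      g₂ ∈ idealOf h → χ g₂ = g₁ * χ h →
      g₃ ∈ idealOf h → χ g₃ = f * χ h →
      g₄ ∈ idealOf g₃ → ψ (χ g₄) = e * ψ (χ g₃) →
      PairRel ((φ ∘ ψ) ∘ χ) g₂ (φ ∘ (ψ ∘ χ)) g₄) ∧
    -- [id, 1] is a good pair and a two-sided unit
    GoodPair (id : A → A) 1 ∧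
    (∀ (φ : A → A) (e : A), GoodPair φ e →
      PairRel (φ ∘ (id : A → A)) e φ e ∧
      (∀ g : A, g ∈ idealOf e → φ g = 1 * φ e → PairRel ((id : A → A) ∘ φ) g φ e)) ∧
    -- pseudo-inverses: [φ,e]* = [φ⁻¹, φ(e)]
    (∀ (φ ψ : A → A) (e : A), GoodPair φ e → Mult ψ →
      (∀ x ∈ idealOf e, ψ (φ x) = x) → (∀ y ∈ idealOf (φ e), φ (ψ y) = y) →
      GoodPair ψ (φ e) ∧
      PairRel (fun a => φ (ψ (φ a))) e φ e ∧
      PairRel (fun a => ψ (φ (ψ a))) (φ e) ψ (φ e)) := by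
    -- auxiliary fact: under the product hypotheses, g is idempotent and
  -- ψ restricts to a bijection Ag → Aψg
  have key : ∀ (φ : A → A) (e : A) (ψ : A → A) (f g : A), GoodPair φ e → GoodPair ψ f →
      g ∈ idealOf f → ψ g = e * ψ f → g * g = g := by
    rintro φ e ψ f g ⟨hφm, hee, hφb⟩ ⟨hψm, hff, hψb⟩ hgf hgval
    have h1 : ψ (g * g) = ψ g := by
      rw [hψm, hgval]
      calc (e * ψ f) * (e * ψ f) = (e * e) * (ψ f * ψ f) := by ring
        _ = e * ψ (f * f) := by rw [hee, hψm]
        _ = e * ψ f := by rw [hff]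
    have hgg : g * g ∈ idealOf f := by
      obtain ⟨a, rfl⟩ := hgf; exact ⟨a * a * f, by ring⟩
    exact hψb.injOn hgg hgf h1
  refine ⟨?_, ?_, ?_, ?_, ?_, ?_⟩
  · -- closure
    rintro φ e ψ f g hφ hψ hgf hgval
    have hgg := key φ e ψ f g hφ hψ hgf hgval
    obtain ⟨hφm, hee, hφb⟩ := hφ
    obtain ⟨hψm, hff, hψb⟩ := hψ
    refine ⟨fun x y => by simp only [Function.comp_apply, hψm x y, hφm (ψ x) (ψ y)], hgg, ?_⟩
    have hb1 : Set.BijOn ψ (idealOf g) (idealOf (ψ g)) := restrict hψm hff hψb hgf hgg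
    have hψge : ψ g ∈ idealOf e := hgval ▸ ⟨ψ f, mul_comm _ _⟩
    have hψgg : ψ g * ψ g = ψ g := idem_map hψm hgg
    have hb2 : Set.BijOn φ (idealOf (ψ g)) (idealOf (φ (ψ g))) :=
      restrict hφm hee hφb hψge hψgg
    exact hb2.comp hb1
  · -- well-definedness
    rintro φ φ' ψ ψ' e e' f f' g g' hφ hφ' hψ hψ' ⟨hEe, hEφ⟩ ⟨hEf, hEψ⟩ hgf hgval hg'f' hg'val
    subst hEe; subst hEf
    obtain ⟨hψm, hff, hψb⟩ := hψ
    have hgg' : g = g' := by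
      apply hψb.injOn hgf hg'f'
      rw [hgval, hEψ (self_mem hff), hEψ hg'f']
      exact hg'val.symm
    subst hgg'
    refine ⟨rfl, fun x hx => ?_⟩
    have hxf : x ∈ idealOf f := subset_of_mem hgf hx
    have hψx : ψ x ∈ idealOf e := by
      obtain ⟨a, rfl⟩ := hx
      rw [hψm a g, hgval]
      exact ⟨ψ a * ψ f, by ring⟩
    simp only [Function.comp]
    rw [← hEψ hxf, hEφ hψx]
  · -- associativity
    rintro φ ψ χ e f h g₁ g₂ g₃ g₄ hφ hψ hχ hg₁f hg₁v hg₂h hg₂v hg₃h hg₃v hg₄g₃ hg₄v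
    obtain ⟨hψm, hff, hψb⟩ := hψ
    obtain ⟨hχm, hhh, hχb⟩ := hχ
    have hχg₂f : χ g₂ ∈ idealOf f := by
      rw [hg₂v]; obtain ⟨a, rfl⟩ := hg₁f; exact ⟨a * χ h, by ring⟩
    have hχg₄f : χ g₄ ∈ idealOf f := by
      obtain ⟨a, rfl⟩ := hg₄g₃
      rw [hχm, hg₃v]; exact ⟨χ a * χ h, by ring⟩
    have hχeq : χ g₂ = χ g₄ := by
      apply hψb.injOn hχg₂f hχg₄f
      rw [hg₂v, hg₄v, hψm, hg₁v, hg₃v, hψm]; ring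
    have hg₄h : g₄ ∈ idealOf h := subset_of_mem hg₃h hg₄g₃
    have : g₂ = g₄ := hχb.injOn hg₂h hg₄h hχeq
    exact ⟨this, fun x _ => rfl⟩
  · -- unit is a good pair
    exact ⟨fun x y => rfl, one_mul 1, by
      refine ⟨fun x hx => hx, fun x _ y _ hxy => hxy, fun y hy => ⟨y, hy, rfl⟩⟩⟩
  · -- two-sided unit
    rintro φ e ⟨hφm, hee, hφb⟩
    refine ⟨⟨rfl, fun x _ => rfl⟩, fun g hg hgval => ?_⟩
    have : g = e := hφb.injOn hg (self_mem hee) (by rw [hgval, one_mul])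
    exact ⟨this, fun x _ => rfl⟩
  · -- pseudo-inverses
    rintro φ ψ e ⟨hφm, hee, hφb⟩ hψm hψφ hφψ
    have hfe : φ e * φ e = φ e := idem_map hφm hee
    have hψφe : ψ (φ e) = e := hψφ e (self_mem hee)
    refine ⟨⟨hψm, hfe, ?_⟩, ⟨rfl, fun x hx => hφψ (φ x) (map_mem hφm hx)⟩,
      ⟨rfl, fun y hy => by simp only [hφψ y hy]⟩⟩
    rw [hψφe]
    refine ⟨?_, ?_, ?_⟩
    · intro y hy
      obtain ⟨b, rfl⟩ := hy
      rw [hψm, hψφe]; exact mul_mem _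
    · intro y hy y' hy' hyy'
      rw [← hφψ y hy, ← hφψ y' hy', hyy']
    · intro x hx
      exact ⟨φ x, map_mem hφm hx, hψφ x hx⟩
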